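/- Under hypotheses (F1) and (F2), for every λ > 0 the function h_λ satisfies h_λ(s) = o(s) as s → 0⁺; that is, the limit of h_λ(s)/s as s → 0⁺ equals 0. -/

import Mathlib

open Real Filter Topology

/-- The piecewise function `g` from the paper: `g(t) = sqrt(1 - κ t^2)` for `|t| < sqrt(1/(3κ))`,
and `g(t) = 1/(3 sqrt(2κ) |t|) + sqrt(1/6)` for `|t| ≥ sqrt(1/(3κ))`; in particular `g` is even. -/
noncomputable def gfun (κ : ℝ) (t : ℝ) : ℝ :=
  if |t| < Real.sqrt (1 / (3 * κ)) then Real.sqrt (1 - κ * t ^ 2)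
  else 1 / (3 * Real.sqrt (2 * κ) * |t|) + Real.sqrt (1 / 6)

/-- `G(t) = ∫ s in [0,t], g(s) ds`. -/
noncomputable def Gfun (κ : ℝ) (t : ℝ) : ℝ := ∫ s in (0:ℝ)..t, gfun κ s

/-- `G⁻¹`, the inverse function of `G`. -/
noncomputable def Ginv (κ : ℝ) : ℝ → ℝ := Function.invFun (Gfun κ)

open MeasureTheory

lemma Rpos {κ : ℝ} (hκ : 0 < κ) : 0 < Real.sqrt (1 / (3 * κ)) :=
  Real.sqrt_pos.2 (by positivity)

lemma gfun_lower {κ : ℝ} (hκ : 0 < κ) (t : ℝ) : Real.sqrt (1/6) ≤ gfun κ t := by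
  unfold gfun
  split_ifs with h
  · apply Real.sqrt_le_sqrt
    have h2 : |t| ^ 2 < Real.sqrt (1 / (3 * κ)) ^ 2 :=
      pow_lt_pow_left₀ h (abs_nonneg t) two_ne_zero
    rw [sq_abs, Real.sq_sqrt (by positivity : (0:ℝ) ≤ 1 / (3 * κ))] at h2
    have : κ * t ^ 2 < κ * (1 / (3 * κ)) := by
      exact mul_lt_mul_of_pos_left h2 hκ
    have hk : κ * (1 / (3 * κ)) = 1/3 := by field_simp
    nlinarith
  · have : 0 ≤ 1 / (3 * Real.sqrt (2 * κ) * |t|) := by positivity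
    linarith

lemma gfun_pos {κ : ℝ} (hκ : 0 < κ) (t : ℝ) : 0 < gfun κ t :=
  lt_of_lt_of_le (Real.sqrt_pos.2 (by norm_num)) (gfun_lower hκ t)

lemma gfun_bound {κ : ℝ} (hκ : 0 < κ) :
    ∃ M : ℝ, ∀ t, |gfun κ t| ≤ M := by
  set R := Real.sqrt (1 / (3 * κ)) with hR
  refine ⟨1 + (1 / (3 * Real.sqrt (2 * κ) * R) + Real.sqrt (1/6)), fun t => ?_⟩
  rw [abs_of_pos (gfun_pos hκ t)]
  have hc : 0 ≤ 1 / (3 * Real.sqrt (2 * κ) * R) + Real.sqrt (1/6) := by positivity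
  unfold gfun
  split_ifs with h
  · have : Real.sqrt (1 - κ * t ^ 2) ≤ 1 :=
      Real.sqrt_le_one.mpr (by nlinarith [sq_nonneg t])
    nlinarith [Real.sqrt_nonneg (1:ℝ)]
  · push_neg at h
    have hRpos : 0 < R := Rpos hκ
    have h2 : 0 < 3 * Real.sqrt (2 * κ) * R := by positivity
    have h3 : 1 / (3 * Real.sqrt (2 * κ) * |t|) ≤ 1 / (3 * Real.sqrt (2 * κ) * R) := by
      apply one_div_le_one_div_of_le h2
      have : 0 < Real.sqrt (2 * κ) := Real.sqrt_pos.2 (by positivity)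
      nlinarith
    linarith

lemma measurable_gfun (κ : ℝ) : Measurable (gfun κ) := by
  unfold gfun
  apply Measurable.ite
  · exact measurableSet_lt measurable_abs measurable_const
  · exact (Real.continuous_sqrt.measurable).comp
      (measurable_const.sub ((measurable_id.pow_const 2).const_mul κ))
  · exact (measurable_const.div (measurable_abs.const_mul _)).add measurable_const

lemma intervalIntegrable_gfun {κ : ℝ} (hκ : 0 < κ) (a b : ℝ) :
    IntervalIntegrable (gfun κ) volume a b := by
  obtain ⟨M, hM⟩ := gfun_bound hκ
  rw [intervalIntegrable_iff]
  apply MeasureTheory.Integrable.mono' (g := fun _ => M)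
    (integrableOn_const measure_Ioc_lt_top.ne)
    ((measurable_gfun κ).aestronglyMeasurable.restrict)
  exact Filter.Eventually.of_forall fun t => by simpa using hM t

lemma Gfun_zero (κ : ℝ) : Gfun κ 0 = 0 := intervalIntegral.integral_same

lemma Gfun_sub {κ : ℝ} (hκ : 0 < κ) (a b : ℝ) :
    Gfun κ b - Gfun κ a = ∫ s in a..b, gfun κ s := by
  rw [Gfun, Gfun, ← intervalIntegral.integral_add_adjacent_intervals
    (intervalIntegrable_gfun hκ 0 a) (intervalIntegrable_gfun hκ a b)]
  ring

lemma Gfun_strictMono {κ : ℝ} (hκ : 0 < κ) : StrictMono (Gfun κ) := by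
  intro a b hab
  have h1 : (b - a) * Real.sqrt (1/6) ≤ ∫ s in a..b, gfun κ s := by
    have := intervalIntegral.integral_mono_on (μ := volume) hab.le
      (intervalIntegrable_const (c := Real.sqrt (1/6)))
      (intervalIntegrable_gfun hκ a b) (fun x _ => gfun_lower hκ x)
    simpa using this
  have h2 : 0 < (b - a) * Real.sqrt (1/6) := by
    have : (0:ℝ) < Real.sqrt (1/6) := Real.sqrt_pos.2 (by norm_num)
    nlinarith
  have := Gfun_sub hκ a b
  linarith

lemma Gfun_continuous {κ : ℝ} (hκ : 0 < κ) : Continuous (Gfun κ) :=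
  intervalIntegral.continuous_primitive (fun a b => intervalIntegrable_gfun hκ a b) 0

lemma Gfun_surjective {κ : ℝ} (hκ : 0 < κ) : Function.Surjective (Gfun κ) := by
  have hs : (0:ℝ) < Real.sqrt (1/6) := Real.sqrt_pos.2 (by norm_num)
  apply (Gfun_continuous hκ).surjective
  · apply tendsto_atTop_mono' _ _ (tendsto_id.const_mul_atTop hs)
    filter_upwards [eventually_ge_atTop (0:ℝ)] with t ht
    have h1 : Real.sqrt (1/6) * (t - 0) ≤ Gfun κ t - Gfun κ 0 := by
      rw [Gfun_sub hκ 0 t]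
      have := intervalIntegral.integral_mono_on (μ := volume) ht
        (intervalIntegrable_const (c := Real.sqrt (1/6)))
        (intervalIntegrable_gfun hκ 0 t) (fun x _ => gfun_lower hκ x)
      simpa [mul_comm] using this
    simp only [Gfun_zero, sub_zero] at h1
    simpa [id] using h1
  · apply tendsto_atBot_mono' _ _ (tendsto_id.const_mul_atBot hs)
    filter_upwards [eventually_le_atBot (0:ℝ)] with t ht
    have h1 : Real.sqrt (1/6) * (0 - t) ≤ Gfun κ 0 - Gfun κ t := by
      rw [Gfun_sub hκ t 0]
      have := intervalIntegral.integral_mono_on (μ := volume) ht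
        (intervalIntegrable_const (c := Real.sqrt (1/6)))
        (intervalIntegrable_gfun hκ t 0) (fun x _ => gfun_lower hκ x)
      simpa [mul_comm] using this
    simp only [Gfun_zero, zero_sub, sub_zero] at h1
    simp only [id]
    nlinarith

lemma Ginv_Gfun {κ : ℝ} (hκ : 0 < κ) (t : ℝ) : Ginv κ (Gfun κ t) = t :=
  Function.leftInverse_invFun (Gfun_strictMono hκ).injective t

lemma Gfun_Ginv {κ : ℝ} (hκ : 0 < κ) (s : ℝ) : Gfun κ (Ginv κ s) = s :=
  Function.rightInverse_invFun (Gfun_surjective hκ) s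

lemma Ginv_zero {κ : ℝ} (hκ : 0 < κ) : Ginv κ 0 = 0 := by
  have := Ginv_Gfun hκ 0
  rwa [Gfun_zero] at this

lemma Ginv_pos {κ : ℝ} (hκ : 0 < κ) {s : ℝ} (hs : 0 < s) : 0 < Ginv κ s := by
  have h : Gfun κ 0 < Gfun κ (Ginv κ s) := by
    rw [Gfun_zero, Gfun_Ginv hκ]; exact hs
  exact (Gfun_strictMono hκ).lt_iff_lt.1 h

lemma Ginv_lt {κ : ℝ} (hκ : 0 < κ) {s b : ℝ} (hs : s < Gfun κ b) : Ginv κ s < b := by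
  have h : Gfun κ (Ginv κ s) < Gfun κ b := by rw [Gfun_Ginv hκ]; exact hs
  exact (Gfun_strictMono hκ).lt_iff_lt.1 h

lemma tendsto_Ginv {κ : ℝ} (hκ : 0 < κ) :
    Tendsto (Ginv κ) (𝓝[>] (0:ℝ)) (𝓝[>] (0:ℝ)) := by
  rw [tendsto_nhdsWithin_iff]
  constructor
  · rw [tendsto_order]
    constructor
    · intro a ha
      filter_upwards [self_mem_nhdsWithin] with s hs
      exact lt_trans ha (Ginv_pos hκ hs)
    · intro b hb
      have hGb : 0 < Gfun κ b := by
        have := (Gfun_strictMono hκ) hb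
        rwa [Gfun_zero] at this
      filter_upwards [Ioo_mem_nhdsGT hGb] with s hs
      exact Ginv_lt hκ hs.2
  · filter_upwards [self_mem_nhdsWithin] with s hs
    exact Ginv_pos hκ hs

lemma gfun_zero_eq {κ : ℝ} (hκ : 0 < κ) : gfun κ 0 = 1 := by
  unfold gfun
  rw [if_pos (by simpa using Rpos hκ)]
  simp

lemma continuousAt_gfun_zero {κ : ℝ} (hκ : 0 < κ) : ContinuousAt (gfun κ) 0 := by
  have hev : (fun t => Real.sqrt (1 - κ * t ^ 2)) =ᶠ[𝓝 (0:ℝ)] gfun κ := by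
    have hopen : IsOpen {t : ℝ | |t| < Real.sqrt (1 / (3 * κ))} :=
      isOpen_lt continuous_abs continuous_const
    filter_upwards [hopen.mem_nhds (by simpa using Rpos hκ)] with t ht
    unfold gfun
    rw [if_pos ht]
  exact ContinuousAt.congr
    (Real.continuous_sqrt.comp (by continuity : Continuous fun t : ℝ => 1 - κ * t ^ 2)).continuousAt
    hev

lemma hasDerivAt_Gfun_zero {κ : ℝ} (hκ : 0 < κ) : HasDerivAt (Gfun κ) 1 0 := by
  have := intervalIntegral.integral_hasDerivAt_right
    (intervalIntegrable_gfun hκ 0 0)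
    ((measurable_gfun κ).stronglyMeasurable.stronglyMeasurableAtFilter)
    (continuousAt_gfun_zero hκ)
  rwa [gfun_zero_eq hκ] at this

lemma tendsto_Ginv_div {κ : ℝ} (hκ : 0 < κ) :
    Tendsto (fun s => Ginv κ s / s) (𝓝[>] (0:ℝ)) (𝓝 1) := by
  have hslope : Tendsto (fun t => Gfun κ t / t) (𝓝[>] (0:ℝ)) (𝓝 1) := by
    have h := hasDerivAt_iff_tendsto_slope.1 (hasDerivAt_Gfun_zero hκ)
    have h2 : Tendsto (slope (Gfun κ) 0) (𝓝[>] (0:ℝ)) (𝓝 1) :=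
      h.mono_left (nhdsWithin_mono 0 (fun x hx => by
        simp only [Set.mem_compl_iff, Set.mem_singleton_iff]
        exact ne_of_gt hx))
    apply h2.congr
    intro t
    simp [slope_def_field, Gfun_zero]
  have hinv : Tendsto (fun t => t / Gfun κ t) (𝓝[>] (0:ℝ)) (𝓝 1) := by
    have := (hslope.inv₀ one_ne_zero)
    simp only [inv_div, inv_one] at this
    exact this
  have := hinv.comp (tendsto_Ginv hκ)
  apply this.congr
  intro s
  simp [Function.comp, Gfun_Ginv hκ]

lemma tendsto_deriv_zero {f : ℝ → ℝ} {α c : ℝ} (hα : 2 < α)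
    (hd0 : Tendsto (fun t : ℝ => deriv f t / t ^ (α - 2)) (𝓝[>] (0 : ℝ)) (𝓝 c)) :
    Tendsto (deriv f) (𝓝[>] (0:ℝ)) (𝓝 0) := by
  have hpow : Tendsto (fun t : ℝ => t ^ (α - 2)) (𝓝[>] (0:ℝ)) (𝓝 0) := by
    have hc : ContinuousAt (fun x : ℝ => x ^ (α - 2)) 0 :=
      Real.continuousAt_rpow_const 0 (α - 2) (Or.inr (by linarith))
    have h2 : Tendsto (fun x : ℝ => x ^ (α - 2)) (𝓝[>] (0:ℝ)) (𝓝 ((0:ℝ) ^ (α - 2))) :=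
      hc.tendsto.mono_left (nhdsWithin_le_nhds (s := Set.Ioi 0))
    rwa [Real.zero_rpow (by linarith : α - 2 ≠ 0)] at h2
  have hmul := hd0.mul hpow
  rw [mul_zero] at hmul
  apply hmul.congr'
  filter_upwards [self_mem_nhdsWithin] with t ht
  have : t ^ (α - 2) ≠ 0 := (Real.rpow_pos_of_pos ht _).ne'
  field_simp

lemma tendsto_f_div {f : ℝ → ℝ} (hf1 : ContDiffOn ℝ 1 f (Set.Ici (0 : ℝ)))
    (hf0 : f 0 = 0)
    (hder : Tendsto (deriv f) (𝓝[>] (0:ℝ)) (𝓝 0)) :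
    Tendsto (fun t => f t / t) (𝓝[>] (0:ℝ)) (𝓝 0) := by
  have hcw : ContinuousWithinAt (derivWithin f (Set.Ici 0)) (Set.Ici 0) 0 :=
    (hf1.continuousOn_derivWithin (uniqueDiffOn_Ici 0) le_rfl) 0 Set.self_mem_Ici
  have h1 : Tendsto (derivWithin f (Set.Ici 0)) (𝓝[>] (0:ℝ))
      (𝓝 (derivWithin f (Set.Ici 0) 0)) :=
    hcw.tendsto.mono_left (nhdsWithin_mono 0 Set.Ioi_subset_Ici_self)
  have h2 : Tendsto (derivWithin f (Set.Ici 0)) (𝓝[>] (0:ℝ)) (𝓝 0) := by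
    apply hder.congr'
    filter_upwards [self_mem_nhdsWithin] with t ht
    exact (derivWithin_of_mem_nhds
      (Filter.mem_of_superset (isOpen_Ioi.mem_nhds ht) Set.Ioi_subset_Ici_self)).symm
  have hzero : derivWithin f (Set.Ici 0) 0 = 0 := tendsto_nhds_unique h1 h2
  have hdiff : DifferentiableWithinAt ℝ f (Set.Ici 0) 0 :=
    (hf1.differentiableOn one_ne_zero) 0 Set.self_mem_Ici
  have hdw : HasDerivWithinAt f 0 (Set.Ici 0) 0 := by
    have := hdiff.hasDerivWithinAt
    rwa [hzero] at this
  rw [hasDerivWithinAt_iff_tendsto_slope] at hdw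
  rw [Set.Ici_sdiff_left] at hdw
  apply hdw.congr
  intro t
  simp [slope_def_field, hf0]

/-- The transformed nonlinearity `h_λ(s) = f(G⁻¹ s)/g(G⁻¹ s) - λ G⁻¹ s / g(G⁻¹ s) + λ s`. -/
noncomputable def hlam (κ : ℝ) (f : ℝ → ℝ) (lam : ℝ) (s : ℝ) : ℝ :=
  f (Ginv κ s) / gfun κ (Ginv κ s) - lam * Ginv κ s / gfun κ (Ginv κ s) + lam * s

/-- under (F1)-(F2), for every `λ > 0`, `h_λ(s)/s → 0` as `s → 0⁺`. -/
theorem stmt_15 (N : ℕ) (hN : 3 ≤ N) (f : ℝ → ℝ)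
    (hf1 : ContDiffOn ℝ 1 f (Set.Ici (0 : ℝ))) (hf0 : f 0 = 0)
    (hfpos : ∀ s : ℝ, 0 < s → 0 < f s)
    (α β μ₁ μ₂ : ℝ)
    (hα : 2 < α ∧ α < 2 * N / (N - 2)) (hβ : 2 < β ∧ β < 2 * N / (N - 2))
    (hμ₁ : 0 < μ₁) (hμ₂ : 0 < μ₂)
    (hd0 : Tendsto (fun t : ℝ => deriv f t / t ^ (α - 2)) (𝓝[>] (0 : ℝ))
      (𝓝 (μ₁ * (α - 1))))
    (hdinf : Tendsto (fun t : ℝ => deriv f t / t ^ (β - 2)) atTop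
      (𝓝 (μ₂ * (β - 1))))
    (κ : ℝ) (hκ : 0 < κ) (lam : ℝ) (hlam_pos : 0 < lam) :
    Tendsto (fun s : ℝ => hlam κ f lam s / s) (𝓝[>] (0 : ℝ)) (𝓝 0) := by
  have hT := tendsto_Ginv hκ
  have hA : Tendsto (fun s => f (Ginv κ s) / Ginv κ s) (𝓝[>] (0:ℝ)) (𝓝 0) :=
    (tendsto_f_div hf1 hf0 (tendsto_deriv_zero hα.1 hd0)).comp hT
  have hB : Tendsto (fun s => Ginv κ s / s) (𝓝[>] (0:ℝ)) (𝓝 1) := tendsto_Ginv_div hκ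
  have hC : Tendsto (fun s => gfun κ (Ginv κ s)) (𝓝[>] (0:ℝ)) (𝓝 1) := by
    have := (continuousAt_gfun_zero hκ).tendsto.comp (hT.mono_right nhdsWithin_le_nhds)
    rwa [gfun_zero_eq hκ] at this
  have hCinv : Tendsto (fun s => (gfun κ (Ginv κ s))⁻¹) (𝓝[>] (0:ℝ)) (𝓝 1) := by
    have := hC.inv₀ one_ne_zero
    rwa [inv_one] at this
  have hmain : Tendsto (fun s => f (Ginv κ s) / Ginv κ s * (Ginv κ s / s) *
      (gfun κ (Ginv κ s))⁻¹ - lam * (Ginv κ s / s * (gfun κ (Ginv κ s))⁻¹) + lam)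
      (𝓝[>] (0:ℝ)) (𝓝 (0 * 1 * 1 - lam * (1 * 1) + lam)) :=
    (((hA.mul hB).mul hCinv).sub ((tendsto_const_nhds).mul (hB.mul hCinv))).add
      tendsto_const_nhds
  have : (0:ℝ) * 1 * 1 - lam * (1 * 1) + lam = 0 := by ring
  rw [this] at hmain
  apply hmain.congr'
  filter_upwards [self_mem_nhdsWithin] with s hs
  have hs0 : (s:ℝ) ≠ 0 := ne_of_gt hs
  have ht : Ginv κ s ≠ 0 := ne_of_gt (Ginv_pos hκ hs)
  have hg : gfun κ (Ginv κ s) ≠ 0 := ne_of_gt (gfun_pos hκ _)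
  unfold hlam
  field_simp
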